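/- For any multiplicative character A on F_q and x_1,…,x_n ∈ F_q, one has A(1+x_1+⋯+x_n) = δ(x_1)⋯δ(x_n) + Σ_{k=1}^{n} (q^k/(q-1)^k) Σ_{1≤r_1<⋯<r_k≤n} (∏_{i∉{r_1,…,r_k}} δ(x_i)) Σ_{χ_1,…,χ_k} (A choose χ_1,…,χ_k) χ_1(x_{r_1})⋯χ_k(x_{r_k}), where the inner sum is over all k-tuples of multiplicative characters of F_q and δ(x)=1 if x=0 and 0 otherwise. -/

import Mathlib

open Finset

variable {F : Type} [Field F] [Fintype F] [DecidableEq F]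

noncomputable instance : Fintype (MulChar F ℂ) := Fintype.ofFinite _

/-- Multiple Jacobi sum `J(λ₀, λ₁,…,λ_k) = Σ_{c₀+c₁+⋯+c_k=1} λ₀(c₀)·∏ λᵢ(cᵢ)`. -/
noncomputable def mJacobi {ι : Type} [Fintype ι] [DecidableEq ι] (lam0 : MulChar F ℂ)
    (lam : ι → MulChar F ℂ) : ℂ :=
  ∑ c0 : F, ∑ c : ι → F,
    if c0 + ∑ i, c i = 1 then lam0 c0 * ∏ i, lam i (c i) else 0

/-- Finite field multinomial coefficient
`(A choose B₁,…,B_n) := (B₁⋯B_n)(-1)/qⁿ · J(A, B̄₁,…,B̄_n)`. -/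
noncomputable def mchoose {ι : Type} [Fintype ι] [DecidableEq ι] (A : MulChar F ℂ)
    (B : ι → MulChar F ℂ) : ℂ :=
  (∏ i, (B i) (-1)) / (Fintype.card F : ℂ) ^ (Fintype.card ι)
    * mJacobi A (fun i => (B i)⁻¹)

/-- Finite field binomial coefficient `(A choose B) := B(-1)/q · J(A, B̄)`. -/
noncomputable def binom (A B : MulChar F ℂ) : ℂ :=
  B (-1) / (Fintype.card F : ℂ)
    * ∑ c : F × F, if c.1 + c.2 = 1 then A c.1 * B⁻¹ c.2 else 0


lemma mulchar_orth (a : F) (ha : a ≠ 0) :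
    ∑ ψ : MulChar F ℂ, ψ a = if a = 1 then ((Fintype.card F : ℂ) - 1) else 0 := by
  split_ifs with h
  · subst h
    simp only [MulChar.map_one, Finset.sum_const, Finset.card_univ, nsmul_eq_mul, mul_one]
    have h1 : Fintype.card (MulChar F ℂ) = Fintype.card Fˣ := by
      have := MulChar.card_eq_card_units_of_hasEnoughRootsOfUnity F ℂ
      simpa [Nat.card_eq_fintype_card] using this
    rw [h1, Fintype.card_units]
    have : (1 : ℕ) ≤ Fintype.card F := Fintype.card_pos
    push_cast [Nat.cast_sub this]
    ring
  · obtain ⟨ψ, hψ⟩ := MulChar.exists_apply_ne_one_of_hasEnoughRootsOfUnity F ℂ h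
    have key : ψ a * ∑ χ : MulChar F ℂ, χ a = ∑ χ : MulChar F ℂ, χ a := by
      rw [Finset.mul_sum]
      exact Fintype.sum_equiv (Equiv.mulLeft ψ) _ _ (fun χ => by
        simp [MulChar.mul_apply])
    have h2 : (ψ a - 1) * ∑ χ : MulChar F ℂ, χ a = 0 := by
      rw [sub_one_mul, key, sub_self]
    rcases mul_eq_zero.mp h2 with h' | h'
    · exact absurd (sub_eq_zero.mp h') hψ
    · exact h'

lemma mulchar_aux (c y : F) (hy : y ≠ 0) :
    ∑ ψ : MulChar F ℂ, ψ (-1) * ψ⁻¹ c * ψ y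
      = if c = -y then ((Fintype.card F : ℂ) - 1) else 0 := by
  by_cases hc : c = 0
  · have h1 : ∀ ψ : MulChar F ℂ, ψ⁻¹ c = 0 := fun ψ => by
      rw [hc]; exact ψ⁻¹.map_nonunit (by simp)
    have h2 : ¬ (c = -y) := by rw [hc]; exact fun h => hy (by simpa using h.symm)
    simp [h1, h2]
  · have h1 : ∀ ψ : MulChar F ℂ, ψ (-1) * ψ⁻¹ c * ψ y = ψ (-y / c) := by
      intro ψ
      rw [MulChar.inv_apply' ψ c, ← map_mul, ← map_mul]
      congr 1
      field_simp
    rw [Fintype.sum_congr _ _ h1, mulchar_orth _ (by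
      exact div_ne_zero (neg_ne_zero.mpr hy) hc)]
    have : (-y / c = 1) = (c = -y) := by
      rw [div_eq_one_iff_eq hc]; exact propext ⟨Eq.symm, Eq.symm⟩
    simp only [this]

lemma mchoose_key {ι : Type} [Fintype ι] [DecidableEq ι] (A : MulChar F ℂ) (y : ι → F)
    (hy : ∀ i, y i ≠ 0) :
    ∑ χ : ι → MulChar F ℂ, mchoose A χ * ∏ i, χ i (y i)
      = (((Fintype.card F : ℂ) - 1) / (Fintype.card F : ℂ)) ^ (Fintype.card ι)
          * A (1 + ∑ i, y i) := by
  set q : ℂ := (Fintype.card F : ℂ) with hq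
  set k : ℕ := Fintype.card ι with hk
  have step1 : ∑ χ : ι → MulChar F ℂ, mchoose A χ * ∏ i, χ i (y i)
      = ∑ c0 : F, ∑ c : ι → F, (if c0 + ∑ i, c i = 1 then
          A c0 / q ^ k * ∏ i, (∑ ψ : MulChar F ℂ, ψ (-1) * ψ⁻¹ (c i) * ψ (y i)) else 0) := by
    unfold mchoose mJacobi
    simp only [Finset.mul_sum, Finset.sum_mul, mul_ite, ite_mul, zero_mul, mul_zero]
    rw [Finset.sum_comm]
    refine Finset.sum_congr rfl fun c0 _ => ?_
    rw [Finset.sum_comm]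
    refine Finset.sum_congr rfl fun c _ => ?_
    by_cases hcond : c0 + ∑ i, c i = 1
    · simp only [if_pos hcond]
      have h2 : ∀ χ : ι → MulChar F ℂ,
          (∏ i, (χ i) (-1)) / q ^ k * (A c0 * ∏ i, (χ i)⁻¹ (c i)) * ∏ i, (χ i) (y i)
            = A c0 / q ^ k * ∏ i, ((χ i) (-1) * (χ i)⁻¹ (c i) * (χ i) (y i)) := by
        intro χ
        rw [Finset.prod_mul_distrib, Finset.prod_mul_distrib]
        ring
      rw [Fintype.sum_congr _ _ h2, ← Finset.mul_sum]
      congr 1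
      rw [← Fintype.piFinset_univ]
      exact (Finset.prod_univ_sum (fun _ => (Finset.univ : Finset (MulChar F ℂ)))
        (fun i ψ => ψ (-1) * ψ⁻¹ (c i) * ψ (y i))).symm
    · simp only [if_neg hcond, Finset.sum_const_zero]
  rw [step1]
  have step2 : ∀ c0 : F, ∀ c : ι → F,
      (if c0 + ∑ i, c i = 1 then
          A c0 / q ^ k * ∏ i, (∑ ψ : MulChar F ℂ, ψ (-1) * ψ⁻¹ (c i) * ψ (y i)) else 0)
      = (if c0 + ∑ i, c i = 1 then
          A c0 / q ^ k * ∏ i, (if c i = -(y i) then (q - 1) else 0) else 0) := by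
    intro c0 c
    congr 1
    congr 1
    exact Finset.prod_congr rfl fun i _ => mulchar_aux (c i) (y i) (hy i)
  simp only [step2]
  have step3 : ∀ c0 : F, (∑ c : ι → F, if c0 + ∑ i, c i = 1 then
          A c0 / q ^ k * ∏ i, (if c i = -(y i) then (q - 1) else 0) else 0)
      = (if c0 = 1 + ∑ i, y i then A c0 / q ^ k * (q-1) ^ k else 0) := by
    intro c0
    rw [Finset.sum_eq_single (fun i => -(y i))]
    · have hprod : (∏ i, (if -(y i) = -(y i) then (q - 1) else 0)) = (q-1)^k := by
        simp [hk]
      have hcond : (c0 + ∑ i, -(y i) = 1) = (c0 = 1 + ∑ i, y i) :=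
        propext ⟨fun h => by rw [← h]; simp only [Finset.sum_neg_distrib]; ring,
          fun h => by rw [h]; simp only [Finset.sum_neg_distrib]; ring⟩
      simp only [hcond]
      simp [hk]
    · intro c _ hc
      have : ∃ i, c i ≠ -(y i) := by
        by_contra hcon
        push_neg at hcon
        exact hc (funext hcon)
      obtain ⟨i, hi⟩ := this
      have : (∏ i, (if c i = -(y i) then (q - 1) else 0)) = 0 :=
        Finset.prod_eq_zero (Finset.mem_univ i) (if_neg hi)
      rw [this, mul_zero, ite_self]
    · intro h
      exact absurd (Finset.mem_univ _) h
  simp only [step3]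
  rw [Finset.sum_ite_eq' Finset.univ (1 + ∑ i, y i) (fun c0 => A c0 / q ^ k * (q-1) ^ k)]
  simp only [Finset.mem_univ, if_true]
  rw [div_pow]
  ring

theorem char_multinomial_expansion (n : ℕ) (A : MulChar F ℂ) (x : Fin n → F) :
    A (1 + ∑ i, x i) =
      (∏ i, (if x i = 0 then (1 : ℂ) else 0)) +
        ∑ k ∈ Finset.Icc 1 n,
          ((Fintype.card F : ℂ) / ((Fintype.card F : ℂ) - 1)) ^ k *
            ∑ S ∈ Finset.univ.filter (fun S : Finset (Fin n) => S.card = k),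
              (∏ i ∈ Sᶜ, (if x i = 0 then (1 : ℂ) else 0)) *
                ∑ χ : {i : Fin n // i ∈ S} → MulChar F ℂ,
                  mchoose A χ * ∏ i : {i : Fin n // i ∈ S}, χ i (x i.1) := by
  set q : ℂ := (Fintype.card F : ℂ) with hq
  have hq0 : q ≠ 0 := Nat.cast_ne_zero.mpr Fintype.card_ne_zero
  have hcard1 : 1 < Fintype.card F := Fintype.one_lt_card
  have hq1 : q - 1 ≠ 0 := by
    rw [hq, sub_ne_zero]
    intro h
    have : Fintype.card F = 1 := Nat.cast_injective (R := ℂ) (by simpa using h)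
    omega
  have hinner0 : ∀ S : Finset (Fin n), (∃ i ∈ S, x i = 0) →
      (∑ χ : {i : Fin n // i ∈ S} → MulChar F ℂ,
        mchoose A χ * ∏ i : {i : Fin n // i ∈ S}, χ i (x i.1)) = 0 := by
    rintro S ⟨i, hiS, hxi⟩
    refine Finset.sum_eq_zero fun χ _ => ?_
    have hz : (χ ⟨i, hiS⟩) (x i) = 0 := by
      rw [hxi]; exact (χ _).map_nonunit (by simp)
    rw [Finset.prod_eq_zero (Finset.mem_univ (⟨i, hiS⟩ : {i : Fin n // i ∈ S})) hz, mul_zero]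
  by_cases hall : ∀ i, x i = 0
  · have hsum : ∑ i, x i = 0 := Finset.sum_eq_zero fun i _ => hall i
    have hP : (∏ i, (if x i = 0 then (1 : ℂ) else 0)) = 1 :=
      Finset.prod_eq_one fun i _ => if_pos (hall i)
    have hrest : ∑ k ∈ Finset.Icc 1 n, (q / (q - 1)) ^ k *
        ∑ S ∈ Finset.univ.filter (fun S : Finset (Fin n) => S.card = k),
          (∏ i ∈ Sᶜ, (if x i = 0 then (1 : ℂ) else 0)) *
            ∑ χ : {i : Fin n // i ∈ S} → MulChar F ℂ,
              mchoose A χ * ∏ i : {i : Fin n // i ∈ S}, χ i (x i.1) = 0 := by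
      refine Finset.sum_eq_zero fun k hk => ?_
      refine mul_eq_zero_of_right _ (Finset.sum_eq_zero fun S hS => ?_)
      have hkk : 1 ≤ k := (Finset.mem_Icc.mp hk).1
      have hcardS : S.card = k := (Finset.mem_filter.mp hS).2
      have hne : S.Nonempty := Finset.card_pos.mp (by omega)
      obtain ⟨i, hi⟩ := hne
      rw [hinner0 S ⟨i, hi, hall i⟩, mul_zero]
    rw [hsum, hP, hrest, add_zero, add_zero, MulChar.map_one]
  · push_neg at hall
    obtain ⟨j, hj⟩ := hall
    set Z : Finset (Fin n) := Finset.univ.filter (fun i => x i = 0) with hZ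
    set T : Finset (Fin n) := Zᶜ with hT
    have hjT : j ∈ T := by simp [hT, hZ, hj]
    have hTne : T ≠ ∅ := Finset.ne_empty_of_mem hjT
    have hmemT : ∀ i, i ∈ T ↔ x i ≠ 0 := by
      intro i; simp [hT, hZ]
    have hP : (∏ i, (if x i = 0 then (1 : ℂ) else 0)) = 0 :=
      Finset.prod_eq_zero (Finset.mem_univ j) (if_neg hj)
    -- abbreviation for the S-indexed term
    set G : Finset (Fin n) → ℂ := fun S => (q / (q - 1)) ^ S.card *
      ((∏ i ∈ Sᶜ, (if x i = 0 then (1 : ℂ) else 0)) *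
        ∑ χ : {i : Fin n // i ∈ S} → MulChar F ℂ,
          mchoose A χ * ∏ i : {i : Fin n // i ∈ S}, χ i (x i.1)) with hG
    have hfib : ∑ k ∈ Finset.Icc 1 n, (q / (q - 1)) ^ k *
        ∑ S ∈ Finset.univ.filter (fun S : Finset (Fin n) => S.card = k),
          (∏ i ∈ Sᶜ, (if x i = 0 then (1 : ℂ) else 0)) *
            ∑ χ : {i : Fin n // i ∈ S} → MulChar F ℂ,
              mchoose A χ * ∏ i : {i : Fin n // i ∈ S}, χ i (x i.1)
        = ∑ S ∈ Finset.univ.filter (fun S : Finset (Fin n) => S ≠ ∅), G S := by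
      rw [← Finset.sum_fiberwise_of_maps_to (g := Finset.card) (t := Finset.Icc 1 n)
        (fun S hS => by
          have : S ≠ ∅ := (Finset.mem_filter.mp hS).2
          refine Finset.mem_Icc.mpr ⟨?_, ?_⟩
          · exact Finset.card_pos.mpr (Finset.nonempty_iff_ne_empty.mpr this)
          · simpa using Finset.card_le_univ S) G]
      refine Finset.sum_congr rfl fun k hk => ?_
      have hkk : 1 ≤ k := (Finset.mem_Icc.mp hk).1
      have hfe : (Finset.univ.filter (fun S : Finset (Fin n) => S ≠ ∅)).filter
          (fun S => S.card = k) = Finset.univ.filter (fun S : Finset (Fin n) => S.card = k) := by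
        ext S
        simp only [Finset.mem_filter, Finset.mem_univ, true_and]
        constructor
        · rintro ⟨-, h⟩; exact h
        · intro h
          exact ⟨fun he => by rw [he] at h; simp at h; omega, h⟩
      rw [hfe, Finset.mul_sum]
      refine Finset.sum_congr rfl fun S hS => ?_
      have : S.card = k := (Finset.mem_filter.mp hS).2
      rw [hG]
      simp only [this]
    rw [hP, hfib, zero_add]
    have hvanish : ∀ S ∈ Finset.univ.filter (fun S : Finset (Fin n) => S ≠ ∅),
        S ≠ T → G S = 0 := by
      intro S _ hST
      by_cases hsub : T ⊆ S
      · have hss : T ⊂ S := ⟨hsub, fun h => hST (Finset.Subset.antisymm h hsub)⟩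
        obtain ⟨i, hiS, hiT⟩ := Finset.exists_of_ssubset hss
        have hxi : x i = 0 := by
          by_contra hxin
          exact hiT ((hmemT i).mpr hxin)
        rw [hG]
        simp only
        rw [hinner0 S ⟨i, hiS, hxi⟩, mul_zero, mul_zero]
      · obtain ⟨i, hiT, hiS⟩ := Finset.not_subset.mp hsub
        have hxi : x i ≠ 0 := (hmemT i).mp hiT
        rw [hG]
        simp only
        have hzero : (∏ i ∈ Sᶜ, (if x i = 0 then (1 : ℂ) else 0)) = 0 :=
          Finset.prod_eq_zero (Finset.mem_compl.mpr hiS) (if_neg hxi)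
        rw [hzero, zero_mul, mul_zero]
    rw [Finset.sum_eq_single_of_mem T (by simp [hTne]) hvanish]
    -- now compute G T
    rw [hG]
    simp only
    have hδ : (∏ i ∈ Tᶜ, (if x i = 0 then (1 : ℂ) else 0)) = 1 := by
      refine Finset.prod_eq_one fun i hi => ?_
      rw [hT, compl_compl] at hi
      have : x i = 0 := (Finset.mem_filter.mp hi).2
      exact if_pos this
    rw [hδ, one_mul]
    have hkey := mchoose_key A (fun i : {i : Fin n // i ∈ T} => x i.1)
      (fun i => (hmemT i.1).mp i.2)
    rw [hkey]
    have hsumT : ∑ i : {i : Fin n // i ∈ T}, x i.1 = ∑ i, x i := by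
      rw [Finset.univ_eq_attach, Finset.sum_attach T (fun i => x i)]
      refine Finset.sum_subset (Finset.subset_univ T) fun i _ hiT => ?_
      by_contra hxi
      exact hiT ((hmemT i).mpr hxi)
    have hcardT : Fintype.card {i : Fin n // i ∈ T} = T.card := Fintype.card_coe T
    rw [hsumT, hcardT, ← mul_assoc, ← mul_pow]
    have hcombo : q / (q - 1) * ((q - 1) / q) = 1 := by field_simp
    rw [hcombo, one_pow, one_mul]
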